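/- For A ∈ ℝ^{n₁×n₂×n₃}, the squared Frobenius norm satisfies ‖A‖_F² = Trace(A ⋆ Aᵀ), where Trace is the tensor trace Trace(X) = (1/n₃) Σᵢ trace(X̂^{(i)}). -/

import Mathlib

open Matrix Complex Finset Kronecker

abbrev Tensor (n₁ n₂ n₃ : ℕ) := Fin n₃ → Matrix (Fin n₁) (Fin n₂) ℝ

/-- The DFT along the third (tube) mode: the `i`-th Fourier frontal slice `Â⁽ⁱ⁾`. -/
noncomputable def dftSlice {n₁ n₂ n₃ : ℕ} (A : Tensor n₁ n₂ n₃) (i : Fin n₃) :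
    Matrix (Fin n₁) (Fin n₂) ℂ :=
  ∑ k : Fin n₃,
    Complex.exp (-2 * Real.pi * Complex.I * ((i : ℕ) : ℂ) * ((k : ℕ) : ℂ) / (n₃ : ℂ)) •
      (A k).map Complex.ofReal

/-- The t-product `A ⋆ B = fold (bcirc A · unfold B)`, i.e. circular convolution of
frontal slices. -/
noncomputable def tProd {n₁ q n₂ n₃ : ℕ} (A : Tensor n₁ q n₃) (B : Tensor q n₂ n₃) :
    Tensor n₁ n₂ n₃ :=
  fun k => ∑ m : Fin n₃, A m * B (k - m)

/-- Tensor transpose: transpose each frontal slice and reverse the order of slices 2..n₃. -/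
def tTranspose {n₁ n₂ n₃ : ℕ} (A : Tensor n₁ n₂ n₃) : Tensor n₂ n₁ n₃ :=
  fun k => (A (-k)).transpose

/-- Identity tensor: first frontal slice is the identity matrix, the rest are zero. -/
def tId (n n₃ : ℕ) [NeZero n₃] : Tensor n n n₃ := fun k => if k = 0 then 1 else 0

/-- Tensor trace `(1/n₃) Σᵢ trace Â⁽ⁱ⁾` (complex-valued form). -/
noncomputable def tTraceC {n n₃ : ℕ} (A : Tensor n n n₃) : ℂ :=
  (n₃ : ℂ)⁻¹ * ∑ i : Fin n₃, (dftSlice A i).trace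

/-- Tensor trace (real value). -/
noncomputable def tTraceR {n n₃ : ℕ} (A : Tensor n n n₃) : ℝ := (tTraceC A).re

/-- Squared Frobenius norm of a third-order tensor. -/
def frobSq {n₁ n₂ n₃ : ℕ} (A : Tensor n₁ n₂ n₃) : ℝ :=
  ∑ k : Fin n₃, ∑ p, ∑ q, (A k p q) ^ 2


lemma sum_exp_eq {n₃ : ℕ} [NeZero n₃] (k : Fin n₃) :
    ∑ i : Fin n₃, Complex.exp (-2 * Real.pi * Complex.I * ((i:ℕ):ℂ) * ((k:ℕ):ℂ) / (n₃:ℂ))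
      = if k = 0 then (n₃ : ℂ) else 0 := by
  have hn : 0 < n₃ := k.pos
  have hn' : (n₃ : ℂ) ≠ 0 := by exact_mod_cast hn.ne'
  set z : ℂ := Complex.exp (-2 * Real.pi * Complex.I * ((k:ℕ):ℂ) / (n₃:ℂ)) with hz
  have hterm : ∀ i : Fin n₃,
      Complex.exp (-2 * Real.pi * Complex.I * ((i:ℕ):ℂ) * ((k:ℕ):ℂ) / (n₃:ℂ)) = z ^ (i:ℕ) := by
    intro i
    rw [hz, ← Complex.exp_nat_mul]
    ring_nf
  rw [Fintype.sum_congr _ _ hterm, Fin.sum_univ_eq_sum_range]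
  by_cases hk : k = 0
  · subst hk
    simp [hz]
  · rw [if_neg hk]
    have hkv : 0 < (k : ℕ) := Nat.pos_of_ne_zero (fun h => hk (Fin.ext h))
    have hz1 : z ≠ 1 := by
      intro h
      rw [hz, Complex.exp_eq_one_iff] at h
      obtain ⟨m, hm⟩ := h
      have h2πI : (2:ℂ) * Real.pi * Complex.I ≠ 0 := by
        simp [Real.pi_ne_zero, Complex.I_ne_zero, Complex.ofReal_ne_zero]
      have h3 : (2:ℂ) * Real.pi * Complex.I * (-((k:ℕ):ℂ)) =
          (2:ℂ) * Real.pi * Complex.I * ((m:ℂ) * (n₃:ℂ)) := by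
        field_simp at hm
        linear_combination (2 * Real.pi * Complex.I) * hm
      have h4 := mul_left_cancel₀ h2πI h3
      have h5 : ((k:ℕ):ℤ) = -m * n₃ := by
        have : ((k:ℕ):ℂ) = ((-m * (n₃:ℤ) : ℤ) : ℂ) := by push_cast; linear_combination -h4
        exact_mod_cast this
      have h6 : (n₃:ℤ) ∣ ((k:ℕ):ℤ) := ⟨-m, by rw [h5]; ring⟩
      have h7 : (n₃:ℤ) ≤ ((k:ℕ):ℤ) := Int.le_of_dvd (by exact_mod_cast hkv) h6
      have h8 : (k:ℕ) < n₃ := k.isLt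
      omega
    have hzn : z ^ n₃ = 1 := by
      rw [hz, ← Complex.exp_nat_mul]
      have : (n₃:ℂ) * (-2 * Real.pi * Complex.I * ((k:ℕ):ℂ) / (n₃:ℂ))
          = ((-(k:ℕ) : ℤ) : ℂ) * (2 * Real.pi * Complex.I) := by
        field_simp
        push_cast
        ring
      rw [this, Complex.exp_int_mul_two_pi_mul_I]
    rw [geom_sum_eq hz1, hzn]
    simp

/-- `‖A‖_F² = Trace (A ⋆ Aᵀ)`. -/
theorem frobSq_eq_tTrace_tProd_transpose {n₁ n₂ n₃ : ℕ} (A : Tensor n₁ n₂ n₃) :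
    ((frobSq A : ℝ) : ℂ) = tTraceC (tProd A (tTranspose A)) := by
  rcases Nat.eq_zero_or_pos n₃ with h | h
  · subst h; simp [frobSq, tTraceC]
  haveI : NeZero n₃ := ⟨h.ne'⟩
  have hn' : (n₃ : ℂ) ≠ 0 := by exact_mod_cast h.ne'
  have hT : ∀ (k : Fin n₃) (p : Fin n₁),
      (tProd A (tTranspose A)) k p p = ∑ m : Fin n₃, ∑ q, A m p q * A (m - k) p q := by
    intro k p
    simp [tProd, tTranspose, Matrix.sum_apply, Matrix.mul_apply, neg_sub,
      Matrix.transpose_apply]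
  calc ((frobSq A : ℝ) : ℂ)
      = (n₃:ℂ)⁻¹ * ∑ k : Fin n₃, (if k = 0 then (n₃:ℂ) else 0) *
          ∑ p, ∑ m : Fin n₃, ∑ q, ((A m p q * A (m - k) p q : ℝ) : ℂ) := by
        simp only [ite_mul, zero_mul, Finset.sum_ite_eq', Finset.mem_univ, if_true,
          sub_zero]
        rw [inv_mul_cancel_left₀ hn', frobSq]
        push_cast
        rw [Finset.sum_comm]
        simp [sq]
    _ = (n₃:ℂ)⁻¹ * ∑ k : Fin n₃,
          (∑ i : Fin n₃, Complex.exp (-2 * Real.pi * Complex.I * ((i:ℕ):ℂ) * ((k:ℕ):ℂ) / (n₃:ℂ))) *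
          ∑ p, ∑ m : Fin n₃, ∑ q, ((A m p q * A (m - k) p q : ℝ) : ℂ) := by
        simp_rw [sum_exp_eq]
    _ = tTraceC (tProd A (tTranspose A)) := by
        rw [tTraceC]
        congr 1
        simp_rw [Finset.sum_mul]
        rw [Finset.sum_comm]
        refine Finset.sum_congr rfl fun i _ => ?_
        rw [dftSlice, Matrix.trace_sum]
        refine Finset.sum_congr rfl fun k _ => ?_
        rw [Matrix.trace_smul, smul_eq_mul]
        congr 1
        rw [Matrix.trace]
        simp only [Matrix.diag_apply, Matrix.map_apply, hT]
        push_cast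
        rfl
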